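/- Let B be a Boolean algebra, and let Spec(B) denote the set of bounded lattice homomorphisms f : B → Bool, topologized as a subspace of the product space Bool^B where Bool carries the discrete topology. Then the map sending b ∈ B to V_b = { f ∈ Spec(B) | f(b) = ⊤ } is an isomorphism of Boolean algebras from B onto the Boolean algebra of clopen subsets of Spec(B): each V_b is clopen, the map is injective, preserves ⊤, ⊥, joins, meets and complements, and every clopen subset of Spec(B) is of the form V_b for some b ∈ B. -/

import Mathlib

lemma stone_aux_exists_hom {B : Type*} [BooleanAlgebra B] {a b : B} (h : ¬ a ≤ b) :
    ∃ f : BoundedLatticeHom B Bool, f a = ⊤ ∧ f b = ⊥ := by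
  classical
  have hd : Disjoint (↑(Order.PFilter.principal a) : Set B)
      (↑(Order.Ideal.principal b) : Set B) := by
    rw [Set.disjoint_left]
    intro x hx hx'
    exact h (le_trans (Order.PFilter.mem_principal.mp hx) hx')
  obtain ⟨J, hJp, hIJ, hFJ⟩ := DistribLattice.prime_ideal_of_disjoint_filter_ideal hd
  refine ⟨⟨⟨⟨fun x => decide (x ∉ J), ?_⟩, ?_⟩, ?_, ?_⟩, ?_, ?_⟩
  · intro x y
    by_cases hx : x ∈ J <;> by_cases hy : y ∈ J
    · have : x ⊔ y ∈ J := J.sup_mem hx hy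
      simp [this, hx, hy]
    · have : x ⊔ y ∉ J := fun hc => hy (J.lower le_sup_right hc)
      simp [this, hx, hy]
    · have : x ⊔ y ∉ J := fun hc => hx (J.lower le_sup_left hc)
      simp [this, hx, hy]
    · have : x ⊔ y ∉ J := fun hc => hx (J.lower le_sup_left hc)
      simp [this, hx, hy]
  · intro x y
    by_cases hx : x ∈ J <;> by_cases hy : y ∈ J
    · have : x ⊓ y ∈ J := J.lower inf_le_left hx
      simp [this, hx, hy]
    · have : x ⊓ y ∈ J := J.lower inf_le_left hx
      simp [this, hx, hy]
    · have : x ⊓ y ∈ J := J.lower inf_le_right hy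
      simp [this, hx, hy]
    · have : x ⊓ y ∉ J := fun hc => (hJp.mem_or_mem hc).elim hx hy
      simp [this, hx, hy]
  · have : (⊤ : B) ∉ J := hJp.toIsProper.top_notMem
    simp [this]
  · have : (⊥ : B) ∈ J := J.bot_mem
    simp [this]
  · have ha : a ∉ J := Set.disjoint_left.mp hFJ (Order.PFilter.mem_principal.mpr le_rfl)
    simp [ha]
  · have hb : b ∈ J := hIJ (Order.Ideal.mem_principal.mpr le_rfl)
    simp [hb]

lemma stone_aux_V_finset_sup {B : Type*} [BooleanAlgebra B] {α : Type*} (V : B → Set α)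
    (h0 : V ⊥ = ∅) (h1 : ∀ a b, V (a ⊔ b) = V a ∪ V b) {ι : Type*} [DecidableEq ι]
    (s : Finset ι) (c : ι → B) :
    V (s.sup c) = ⋃ i ∈ s, V (c i) := by
  induction s using Finset.induction_on with
  | empty => simpa using h0
  | insert _ _ h ih =>
      rw [Finset.sup_insert, h1, ih]
      simp

/-- **Stone duality (algebra from space).** Let `B` be a Boolean algebra and let
`S = Spec B ⊆ Bool ^ B` be the set of (functions underlying) bounded lattice homomorphisms
`B → Bool`, topologized as a subspace of the product space `B → Bool` with `Bool` discrete.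
Then `b ↦ V b = { f ∈ S | f b = ⊤ }` is an isomorphism of Boolean algebras from `B` onto
the clopen subsets of `S`: every `V b` is clopen, the map is injective, preserves `⊤`, `⊥`,
joins, meets, and complements, and every clopen subset of `S` is `V b` for some `b`. -/
theorem stone_duality_clopen_algebra
    (B : Type*) [BooleanAlgebra B]
    (S : Set (B → Bool)) (hS : S = Set.range (fun h : BoundedLatticeHom B Bool => ⇑h))
    (V : B → Set S) (hV : ∀ (b : B) (f : S), f ∈ V b ↔ (f : B → Bool) b = ⊤) :
    (∀ b : B, IsClopen (V b)) ∧
      Function.Injective V ∧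
      V ⊤ = Set.univ ∧
      V ⊥ = ∅ ∧
      (∀ a b : B, V (a ⊔ b) = V a ∪ V b) ∧
      (∀ a b : B, V (a ⊓ b) = V a ∩ V b) ∧
      (∀ a : B, V aᶜ = (V a)ᶜ) ∧
      (∀ U : Set S, IsClopen U → ∃ b : B, U = V b) := by
  classical
  -- every element of S is (underlying) a hom
  have top_true : (⊤ : Bool) = true := rfl
  have hhom' : ∀ g ∈ S, ∃ h : BoundedLatticeHom B Bool, ⇑h = g := by
    intro g hg
    rw [hS] at hg
    exact hg
  have hhom : ∀ f : S, ∃ h : BoundedLatticeHom B Bool, ⇑h = (f : B → Bool) :=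
    fun f => hhom' f.1 f.2
  -- hom membership
  have hmemS : ∀ h : BoundedLatticeHom B Bool, ⇑h ∈ S := by
    intro h; rw [hS]; exact ⟨h, rfl⟩
  -- basic facts about V
  have hVdef : ∀ b : B, V b = (fun f : S => (f : B → Bool) b) ⁻¹' {⊤} := by
    intro b; ext f; simp [hV]
  have hclopen : ∀ b : B, IsClopen (V b) := by
    intro b
    rw [hVdef]
    exact (isClopen_discrete {⊤}).preimage ((continuous_apply b).comp continuous_subtype_val)
  have htop : V ⊤ = Set.univ := by
    ext f
    obtain ⟨h, hh⟩ := hhom f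
    simp [hV, ← hh, map_top h]
  have hbot : V ⊥ = ∅ := by
    ext f
    obtain ⟨h, hh⟩ := hhom f
    simp [hV, ← hh, map_bot h]
  have hsup : ∀ a b : B, V (a ⊔ b) = V a ∪ V b := by
    intro a b
    ext f
    obtain ⟨h, hh⟩ := hhom f
    simp only [hV, Set.mem_union, ← hh, map_sup h]
    rcases h a with _ | _ <;> rcases h b with _ | _ <;> simp_all
  have hinf : ∀ a b : B, V (a ⊓ b) = V a ∩ V b := by
    intro a b
    ext f
    obtain ⟨h, hh⟩ := hhom f
    simp only [hV, Set.mem_inter_iff, ← hh, map_inf h]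
    rcases h a with _ | _ <;> rcases h b with _ | _ <;> simp_all
  have hcompl : ∀ a : B, V aᶜ = (V a)ᶜ := by
    intro a
    ext f
    obtain ⟨h, hh⟩ := hhom f
    simp only [hV, Set.mem_compl_iff, ← hh, map_compl' h]
    rcases h a with _ | _ <;> simp_all
  have hinj : Function.Injective V := by
    have key : ∀ a b : B, V a = V b → a ≤ b := by
      intro a b hab
      by_contra hle
      obtain ⟨h, ha, hb⟩ := stone_aux_exists_hom hle
      set f : S := ⟨⇑h, hmemS h⟩ with hf
      have h1 : f ∈ V a := (hV a f).mpr ha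
      rw [hab] at h1
      have h2 : (f : B → Bool) b = ⊤ := (hV b f).mp h1
      rw [show (f : B → Bool) b = h b from rfl, hb] at h2
      simp at h2
    intro a b hab
    exact le_antisymm (key a b hab) (key b a hab.symm)
  refine ⟨hclopen, hinj, htop, hbot, hsup, hinf, hcompl, ?_⟩
  -- surjectivity onto clopens
  -- S is closed, hence compact
  have hSclosed : IsClosed S := by
    have hrw : S = (⋂ (x : B) (y : B), {g : B → Bool | g (x ⊔ y) = g x ⊔ g y}) ∩
        (⋂ (x : B) (y : B), {g : B → Bool | g (x ⊓ y) = g x ⊓ g y}) ∩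
        {g : B → Bool | g ⊤ = ⊤} ∩ {g : B → Bool | g ⊥ = ⊥} := by
      ext g
      simp only [Set.mem_inter_iff, Set.mem_iInter, Set.mem_setOf_eq, hS, Set.mem_range]
      constructor
      · rintro ⟨h, rfl⟩
        exact ⟨⟨⟨fun x y => map_sup h x y, fun x y => map_inf h x y⟩, map_top h⟩, map_bot h⟩
      · rintro ⟨⟨⟨h1, h2⟩, h3⟩, h4⟩
        exact ⟨⟨⟨⟨g, fun x y => h1 x y⟩, fun x y => h2 x y⟩, h3, h4⟩, rfl⟩
    have c1 : ∀ (c : B) (x y : B), IsClosed {g : B → Bool | g c = g x ⊔ g y} := by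
      intro c x y
      have : {g : B → Bool | g c = g x ⊔ g y} =
          (fun g : B → Bool => (g c, g x, g y)) ⁻¹' {p : Bool × Bool × Bool | p.1 = p.2.1 ⊔ p.2.2} :=
        rfl
      rw [this]
      exact (isClosed_discrete _).preimage
        ((continuous_apply c).prodMk ((continuous_apply x).prodMk (continuous_apply y)))
    have c2 : ∀ (c : B) (x y : B), IsClosed {g : B → Bool | g c = g x ⊓ g y} := by
      intro c x y
      have : {g : B → Bool | g c = g x ⊓ g y} =
          (fun g : B → Bool => (g c, g x, g y)) ⁻¹' {p : Bool × Bool × Bool | p.1 = p.2.1 ⊓ p.2.2} :=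
        rfl
      rw [this]
      exact (isClosed_discrete _).preimage
        ((continuous_apply c).prodMk ((continuous_apply x).prodMk (continuous_apply y)))
    have c3 : ∀ (c : B) (v : Bool), IsClosed {g : B → Bool | g c = v} := by
      intro c v
      have : {g : B → Bool | g c = v} = (fun g : B → Bool => g c) ⁻¹' {v} := rfl
      rw [this]
      exact (isClosed_discrete _).preimage (continuous_apply c)
    rw [hrw]
    refine IsClosed.inter (IsClosed.inter (IsClosed.inter ?_ ?_) (c3 ⊤ ⊤)) (c3 ⊥ ⊥)
    · exact isClosed_iInter fun x => isClosed_iInter fun y => c1 _ x y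
    · exact isClosed_iInter fun x => isClosed_iInter fun y => c2 _ x y
  haveI : CompactSpace S := isCompact_iff_compactSpace.mp (hSclosed.isCompact)
  intro U hU
  -- for each f ∈ U find b with f ∈ V b ⊆ U
  have hnbhd : ∀ f : S, f ∈ U → ∃ b : B, f ∈ V b ∧ V b ⊆ U := by
    intro f hf
    obtain ⟨W, hWopen, hWU⟩ := isOpen_induced_iff.mp hU.isOpen
    have hfW : (f : B → Bool) ∈ W := by rw [← hWU] at hf; exact hf
    obtain ⟨I, u, hIu, hpi⟩ := isOpen_pi_iff.mp hWopen _ hfW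
    refine ⟨I.inf (fun x => if (f : B → Bool) x = ⊤ then x else xᶜ), ?_, ?_⟩
    · obtain ⟨h, hh⟩ := hhom f
      rw [hV, ← hh, map_finset_inf]
      rw [Finset.inf_eq_top_iff]
      intro x hx
      simp only [Function.comp_apply]
      split_ifs with hfx
      · exact hfx
      · rw [map_compl' h]
        rcases hbx : h x with _ | _
        · rfl
        · exact absurd (hbx.trans top_true.symm) hfx
    · intro g hg
      obtain ⟨hg', hgagree⟩ : True ∧ ∀ x ∈ I, (g : B → Bool) x = (f : B → Bool) x := by
        refine ⟨trivial, ?_⟩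
        obtain ⟨h, hh⟩ := hhom g
        rw [hV, ← hh, map_finset_inf, Finset.inf_eq_top_iff] at hg
        intro x hx
        have hgx := hg x hx
        simp only [Function.comp_apply] at hgx
        rw [← hh]
        by_cases hfx : (f : B → Bool) x = ⊤
        · rw [if_pos hfx] at hgx
          rw [hgx, hfx]
        · rw [if_neg hfx, map_compl' h] at hgx
          have hxbot : h x = false := by
            rcases hbx : h x with _ | _
            · rfl
            · rw [hbx] at hgx; exact absurd hgx (by decide)
          rw [hxbot]
          rcases hbx : (f : B → Bool) x with _ | _
          · rfl
          · exact absurd (hbx.trans top_true.symm) hfx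
      rw [← hWU]
      apply hpi
      intro x hx
      rw [hgagree x hx]
      exact (hIu x hx).2
  choose! b hb1 hb2 using hnbhd
  -- compactness: finite subcover
  have hcover : U ⊆ ⋃ f : U, V (b f) := by
    intro g hg
    exact Set.mem_iUnion.mpr ⟨⟨g, hg⟩, hb1 g hg⟩
  have hUcomp : IsCompact U := hU.isClosed.isCompact
  obtain ⟨t, ht⟩ := hUcomp.elim_finite_subcover (fun f : U => V (b f))
    (fun f => (hclopen _).isOpen) hcover
  refine ⟨t.sup (fun f : U => b f), ?_⟩
  rw [stone_aux_V_finset_sup V hbot hsup]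
  apply Set.Subset.antisymm
  · exact ht.trans (by rfl)
  · intro g hg
    simp only [Set.mem_iUnion] at hg
    obtain ⟨f, hf, hgf⟩ := hg
    exact hb2 f f.2 hgf
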